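/- Let R be a ring and M an R-module. Then M has strongly FP-injective coresolution dimension at most m if and only if Ext^{i+m}_R(F, M) = 0 for every finitely presented R-module F and every i ≥ 1. -/

import Mathlib

open CategoryTheory

attribute [local instance] HasDerivedCategory.standard
attribute [local instance] CategoryTheory.hasExt_of_hasDerivedCategory
set_option synthInstance.maxHeartbeats 400000

universe u
variable (R : Type u) [Ring R]

/-- Vanishing of `Ext^n`. -/
def extZero (A B : ModuleCat.{u} R) (n : ℕ) : Prop :=
  Subsingleton (Abelian.Ext A B n)

/-- A module is finitely presented. -/
def FinPres (F : ModuleCat.{u} R) : Prop :=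
  ∃ (n : ℕ) (f : (Fin n → R) →ₗ[R] F), Function.Surjective f ∧ (LinearMap.ker f).FG

/-- Strongly FP-injective modules. -/
def StronglyFPInjective (E : ModuleCat.{u} R) : Prop :=
  ∀ F : ModuleCat.{u} R, FinPres R F → ∀ k : ℕ, 1 ≤ k → extZero R F E k

/-- Existence of an exact coresolution `0 → M → E^0 → ⋯ → E^k → 0` of length exactly `k`
with all `E^i` in the class `𝒳`. -/
inductive Cores (𝒳 : ModuleCat.{u} R → Prop) : ModuleCat.{u} R → ℕ → Prop
  | base {M E : ModuleCat.{u} R} (e : M ≅ E) (hE : 𝒳 E) : Cores 𝒳 M 0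
  | step (S : ShortComplex (ModuleCat.{u} R)) (hS : S.ShortExact)
      (hX : 𝒳 S.X₂) {n : ℕ} (h : Cores 𝒳 S.X₃ n) : Cores 𝒳 S.X₁ (n + 1)

/-- Coresolution dimension at most `m`. -/
def coresdimLE (𝒳 : ModuleCat.{u} R → Prop) (M : ModuleCat.{u} R) (m : ℕ) : Prop :=
  ∃ k ≤ m, Cores R 𝒳 M k

/-- Finite coresolution dimension (the class `𝒳^∨`). -/
def coresdimFin (𝒳 : ModuleCat.{u} R → Prop) (M : ModuleCat.{u} R) : Prop :=
  ∃ k, Cores R 𝒳 M k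

/-- Existence of an exact resolution `0 → X_k → ⋯ → X_0 → M → 0` of length exactly `k`. -/
inductive Res (𝒳 : ModuleCat.{u} R → Prop) : ModuleCat.{u} R → ℕ → Prop
  | base {M X : ModuleCat.{u} R} (e : X ≅ M) (hX : 𝒳 X) : Res 𝒳 M 0
  | step (S : ShortComplex (ModuleCat.{u} R)) (hS : S.ShortExact)
      (hX : 𝒳 S.X₂) {n : ℕ} (h : Res 𝒳 S.X₁ n) : Res 𝒳 S.X₃ (n + 1)

/-- Resolution dimension at most `m`. -/
def resdimLE (𝒳 : ModuleCat.{u} R → Prop) (M : ModuleCat.{u} R) (m : ℕ) : Prop :=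
  ∃ k ≤ m, Res R 𝒳 M k

/-- Finite resolution dimension (the class `𝒳^∧`). -/
def resdimFin (𝒳 : ModuleCat.{u} R → Prop) (M : ModuleCat.{u} R) : Prop :=
  ∃ k, Res R 𝒳 M k

/-- Projective dimension at most `m`. -/
def pdLE (M : ModuleCat.{u} R) (m : ℕ) : Prop :=
  resdimLE R (fun P => Projective P) M m

/-- Injective dimension at most `m`. -/
def idLE (M : ModuleCat.{u} R) (m : ℕ) : Prop :=
  coresdimLE R (fun I => Injective I) M m

/-- Strongly FP-injective coresolution dimension at most `m` (the class `SFI^∨_m`). -/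
def SFIdimLE (M : ModuleCat.{u} R) (m : ℕ) : Prop :=
  coresdimLE R (StronglyFPInjective R) M m

/-- Finite strongly FP-injective coresolution dimension (the class `SFI^∨`). -/
def SFIfin (M : ModuleCat.{u} R) : Prop :=
  coresdimFin R (StronglyFPInjective R) M

/-- `N` lies in the right `Ext^1`-orthogonal class `𝒳^⊥1`. -/
def rperp1 (𝒳 : ModuleCat.{u} R → Prop) (N : ModuleCat.{u} R) : Prop :=
  ∀ X, 𝒳 X → extZero R X N 1

/-- `N` lies in the right `Ext`-orthogonal class `𝒳^⊥`. -/
def rperp (𝒳 : ModuleCat.{u} R → Prop) (N : ModuleCat.{u} R) : Prop :=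
  ∀ X, 𝒳 X → ∀ n : ℕ, 1 ≤ n → extZero R X N n

/-- `M` lies in the left `Ext^1`-orthogonal class `⊥1𝒴`. -/
def lperp1 (𝒴 : ModuleCat.{u} R → Prop) (M : ModuleCat.{u} R) : Prop :=
  ∀ Y, 𝒴 Y → extZero R M Y 1

/-- Cotorsion pair. -/
def IsCotorsionPair (𝒳 𝒴 : ModuleCat.{u} R → Prop) : Prop :=
  (∀ M, 𝒳 M ↔ lperp1 R 𝒴 M) ∧ (∀ N, 𝒴 N ↔ rperp1 R 𝒳 N)

/-- Completeness of a pair of classes: every module `M` admits a short exact sequence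
`0 → Y → X → M → 0` with `X ∈ 𝒳`, `Y ∈ 𝒴`. -/
def CompletePair (𝒳 𝒴 : ModuleCat.{u} R → Prop) : Prop :=
  ∀ M : ModuleCat.{u} R, ∃ S : ShortComplex (ModuleCat.{u} R),
    S.ShortExact ∧ 𝒴 S.X₁ ∧ 𝒳 S.X₂ ∧ S.X₃ = M

/-- Hereditary pair: all higher Ext groups between the two classes vanish. -/
def HereditaryPair (𝒳 𝒴 : ModuleCat.{u} R → Prop) : Prop :=
  ∀ X Y, 𝒳 X → 𝒴 Y → ∀ n : ℕ, 1 ≤ n → extZero R X Y n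

/-- A thick class: closed under direct summands and satisfying 2-out-of-3 on
short exact sequences. -/
def Thick (𝒲 : ModuleCat.{u} R → Prop) : Prop :=
  (∀ W A B : ModuleCat.{u} R, 𝒲 W → Nonempty (W ≅ A ⊞ B) → 𝒲 A) ∧
  (∀ S : ShortComplex (ModuleCat.{u} R), S.ShortExact →
    ((𝒲 S.X₁ ∧ 𝒲 S.X₂ → 𝒲 S.X₃) ∧ (𝒲 S.X₁ ∧ 𝒲 S.X₃ → 𝒲 S.X₂) ∧
      (𝒲 S.X₂ ∧ 𝒲 S.X₃ → 𝒲 S.X₁)))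

/-- Projective cotorsion pair. -/
def ProjectiveCotorsionPair (𝒳 𝒲 : ModuleCat.{u} R → Prop) : Prop :=
  IsCotorsionPair R 𝒳 𝒲 ∧ CompletePair R 𝒳 𝒲 ∧ Thick R 𝒲 ∧
    (∀ M, (𝒳 M ∧ 𝒲 M) ↔ Projective M)

/-- An acyclic (exact) complex with projective components. -/
def AcyclicProjectiveComplex (X : CochainComplex (ModuleCat.{u} R) ℤ) : Prop :=
  (∀ i, Projective (X.X i)) ∧ (∀ i, X.ExactAt i)

/-- The complex `X` stays exact after applying `Hom_R(-, L)`. -/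
def HomIntoExact (X : CochainComplex (ModuleCat.{u} R) ℤ) (L : ModuleCat.{u} R) : Prop :=
  ∀ i : ℤ, ∀ φ : X.X i ⟶ L, X.d (i - 1) i ≫ φ = 0 →
    ∃ ψ : X.X (i + 1) ⟶ L, φ = X.d i (i + 1) ≫ ψ

/-- The complex `X` stays exact after applying `Hom_R(L, -)`. -/
def HomFromExact (X : CochainComplex (ModuleCat.{u} R) ℤ) (L : ModuleCat.{u} R) : Prop :=
  ∀ i : ℤ, ∀ φ : L ⟶ X.X i, φ ≫ X.d i (i + 1) = 0 →
    ∃ ψ : L ⟶ X.X (i - 1), φ = ψ ≫ X.d (i - 1) i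

/-- `(𝒫(R), 𝓛)`-Gorenstein projective modules: cycles of acyclic complexes of
projectives which stay exact under `Hom_R(-, L)` for all `L ∈ 𝓛`. -/
def GPrel (𝓛 : ModuleCat.{u} R → Prop) (G : ModuleCat.{u} R) : Prop :=
  ∃ X : CochainComplex (ModuleCat.{u} R) ℤ, AcyclicProjectiveComplex R X ∧
    (∀ L, 𝓛 L → HomIntoExact R X L) ∧
    ∃ i : ℤ, Nonempty (G ≅ ModuleCat.of R (LinearMap.ker (X.d i (i + 1)).hom))

/-- Gorenstein projective modules. -/
def GorensteinProjective (G : ModuleCat.{u} R) : Prop :=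
  GPrel R (fun P => Projective P) G

/-- Gorenstein injective modules. -/
def GorensteinInjective (G : ModuleCat.{u} R) : Prop :=
  ∃ X : CochainComplex (ModuleCat.{u} R) ℤ,
    (∀ i, Injective (X.X i)) ∧ (∀ i, X.ExactAt i) ∧
    (∀ I : ModuleCat.{u} R, Injective I → HomFromExact R X I) ∧
    ∃ i : ℤ, Nonempty (G ≅ ModuleCat.of R (LinearMap.ker (X.d i (i + 1)).hom))

/-- A special `𝒳`-precover of `M`. -/
def SpecialPrecover (𝒳 : ModuleCat.{u} R → Prop) (M : ModuleCat.{u} R) : Prop :=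
  ∃ (G : ModuleCat.{u} R) (g : G ⟶ M), Function.Surjective g ∧ 𝒳 G ∧
    rperp1 R 𝒳 (ModuleCat.of R (LinearMap.ker g.hom))

/-- An `𝒳`-precover of `M`. -/
def Precover (𝒳 : ModuleCat.{u} R → Prop) (M : ModuleCat.{u} R) : Prop :=
  ∃ (G : ModuleCat.{u} R) (g : G ⟶ M), 𝒳 G ∧
    ∀ (G' : ModuleCat.{u} R) (g' : G' ⟶ M), 𝒳 G' → ∃ h : G' ⟶ G, g' = h ≫ g

/-- `spli(R) ≤ m` : every injective has projective dimension at most `m`. -/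
def spliLE (m : ℕ) : Prop := ∀ I : ModuleCat.{u} R, Injective I → pdLE R I m

/-- `silp(R) ≤ m` : every projective has injective dimension at most `m`. -/
def silpLE (m : ℕ) : Prop := ∀ P : ModuleCat.{u} R, Projective P → idLE R P m
/-- Generating relations for the balanced tensor product `I ⊗_R N` of a right module `I`
and a left module `N`. -/
def TensorRelSet (I N : Type u) [AddCommGroup I] [Module Rᵐᵒᵖ I]
    [AddCommGroup N] [Module R N] : Set (FreeAbelianGroup (I × N)) :=
  { x | (∃ i₁ i₂ n, x = FreeAbelianGroup.of (i₁ + i₂, n) - FreeAbelianGroup.of (i₁, n) -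
          FreeAbelianGroup.of (i₂, n)) ∨
        (∃ i n₁ n₂, x = FreeAbelianGroup.of (i, n₁ + n₂) - FreeAbelianGroup.of (i, n₁) -
          FreeAbelianGroup.of (i, n₂)) ∨
        (∃ (i : I) (r : R) (n : N), x = FreeAbelianGroup.of (MulOpposite.op r • i, n) -
          FreeAbelianGroup.of (i, r • n)) }

def TensorRel (I N : Type u) [AddCommGroup I] [Module Rᵐᵒᵖ I]
    [AddCommGroup N] [Module R N] : AddSubgroup (FreeAbelianGroup (I × N)) :=
  AddSubgroup.closure (TensorRelSet R I N)

/-- The balanced tensor product `I ⊗_R N`. -/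
def Tens (I N : Type u) [AddCommGroup I] [Module Rᵐᵒᵖ I]
    [AddCommGroup N] [Module R N] : Type u :=
  FreeAbelianGroup (I × N) ⧸ TensorRel R I N

instance (I N : Type u) [AddCommGroup I] [Module Rᵐᵒᵖ I] [AddCommGroup N] [Module R N] :
    AddCommGroup (Tens R I N) :=
  QuotientAddGroup.Quotient.addCommGroup _

/-- Functoriality of `I ⊗_R -`. -/
noncomputable def rmap (I : Type u) [AddCommGroup I] [Module Rᵐᵒᵖ I]
    {N N' : Type u} [AddCommGroup N] [Module R N] [AddCommGroup N'] [Module R N']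
    (f : N →ₗ[R] N') : Tens R I N →+ Tens R I N' :=
  QuotientAddGroup.map _ _ (FreeAbelianGroup.lift (fun p => FreeAbelianGroup.of (p.1, f p.2)))
    (by
      rw [TensorRel, AddSubgroup.closure_le]
      rintro x (⟨i₁, i₂, nn, rfl⟩ | ⟨i, n₁, n₂, rfl⟩ | ⟨i, r, nn, rfl⟩) <;>
        simp only [SetLike.mem_coe, AddSubgroup.mem_comap, map_sub, FreeAbelianGroup.lift_apply_of]
      · exact AddSubgroup.subset_closure (Or.inl ⟨i₁, i₂, f nn, rfl⟩)
      · exact AddSubgroup.subset_closure (Or.inr (Or.inl ⟨i, f n₁, f n₂, by rw [map_add]⟩))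
      · exact AddSubgroup.subset_closure (Or.inr (Or.inr ⟨i, r, f nn, by rw [map_smul]⟩)))

/-- Functoriality of `- ⊗_R N`. -/
noncomputable def lmap {I J : Type u} [AddCommGroup I] [Module Rᵐᵒᵖ I]
    [AddCommGroup J] [Module Rᵐᵒᵖ J] (g : I →ₗ[Rᵐᵒᵖ] J)
    (N : Type u) [AddCommGroup N] [Module R N] : Tens R I N →+ Tens R J N :=
  QuotientAddGroup.map _ _ (FreeAbelianGroup.lift (fun p => FreeAbelianGroup.of (g p.1, p.2)))
    (by
      rw [TensorRel, AddSubgroup.closure_le]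
      rintro x (⟨i₁, i₂, nn, rfl⟩ | ⟨i, n₁, n₂, rfl⟩ | ⟨i, r, nn, rfl⟩) <;>
        simp only [SetLike.mem_coe, AddSubgroup.mem_comap, map_sub, FreeAbelianGroup.lift_apply_of]
      · exact AddSubgroup.subset_closure (Or.inl ⟨g i₁, g i₂, nn, by rw [map_add]⟩)
      · exact AddSubgroup.subset_closure (Or.inr (Or.inl ⟨g i, n₁, n₂, rfl⟩))
      · exact AddSubgroup.subset_closure (Or.inr (Or.inr ⟨g i, r, nn, by rw [map_smul]⟩)))

/-- Flatness of a left module over a possibly noncommutative ring: the functor `- ⊗_R N`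
preserves injections of right modules. -/
def FlatMod (N : Type u) [AddCommGroup N] [Module R N] : Prop :=
  ∀ (I J : Type u) [AddCommGroup I] [Module Rᵐᵒᵖ I] [AddCommGroup J] [Module Rᵐᵒᵖ J]
    (g : I →ₗ[Rᵐᵒᵖ] J), Function.Injective g → Function.Injective (lmap R g N)

/-- Flat dimension at most `m` (over a possibly noncommutative ring). -/
def fdLE (M : ModuleCat.{u} R) (m : ℕ) : Prop :=
  resdimLE R (fun F => FlatMod R F) M m

/-- Finite flat dimension. -/
def fdFin (M : ModuleCat.{u} R) : Prop :=
  resdimFin R (fun F => FlatMod R F) M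

/-- The complex `X` of left modules stays exact after applying `I ⊗_R -` for the
right module `I`. -/
def TensorExactAgainst (I : Type u) [AddCommGroup I] [Module Rᵐᵒᵖ I]
    (X : CochainComplex (ModuleCat.{u} R) ℤ) : Prop :=
  ∀ i : ℤ, Function.Exact (rmap R I (X.d (i - 1) i).hom) (rmap R I (X.d i (i + 1)).hom)

/-- Gorenstein flat modules: cycles of acyclic complexes of flats which stay exact
under `I ⊗_R -` for all injective right modules `I`. -/
def GorensteinFlat (G : ModuleCat.{u} R) : Prop :=
  ∃ X : CochainComplex (ModuleCat.{u} R) ℤ,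
    (∀ i, FlatMod R (X.X i)) ∧ (∀ i, X.ExactAt i) ∧
    (∀ (I : Type u) [AddCommGroup I] [Module Rᵐᵒᵖ I], Module.Injective Rᵐᵒᵖ I →
      TensorExactAgainst R I X) ∧
    ∃ i : ℤ, Nonempty (G ≅ ModuleCat.of R (LinearMap.ker (X.d i (i + 1)).hom))

/-- A GP-admissible pair of classes of modules. -/
structure GPAdmissible (𝒳 𝒴 : ModuleCat.{u} R → Prop) : Prop where
  isoClosedX : ∀ A B : ModuleCat.{u} R, (A ≅ B) → 𝒳 A → 𝒳 B
  isoClosedY : ∀ A B : ModuleCat.{u} R, (A ≅ B) → 𝒴 A → 𝒴 B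
  ext_vanish : ∀ X Y, 𝒳 X → 𝒴 Y → ∀ n : ℕ, 1 ≤ n → extZero R X Y n
  surj : ∀ A : ModuleCat.{u} R, ∃ (X : ModuleCat.{u} R) (f : X ⟶ A),
    𝒳 X ∧ Function.Surjective f
  coprodX : ∀ A B, 𝒳 A → 𝒳 B → 𝒳 (A ⊞ B)
  coprodY : ∀ A B, 𝒴 A → 𝒴 B → 𝒴 (A ⊞ B)
  extClosedX : ∀ S : ShortComplex (ModuleCat.{u} R), S.ShortExact → 𝒳 S.X₁ → 𝒳 S.X₃ → 𝒳 S.X₂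
  cogen : ∀ X, 𝒳 X → ∃ S : ShortComplex (ModuleCat.{u} R), S.ShortExact ∧ S.X₁ = X ∧
    (𝒳 S.X₂ ∧ 𝒴 S.X₂) ∧ 𝒳 S.X₃

section Auxiliary

open CategoryTheory.Abelian CategoryTheory.Limits

variable {R}

lemma extZero_iff_all (A B : ModuleCat.{u} R) (n : ℕ) :
    extZero R A B n ↔ ∀ x : Abelian.Ext A B n, x = 0 := by
  constructor
  · intro h x
    letI : Subsingleton (Abelian.Ext A B n) := h
    exact Subsingleton.elim x 0
  · intro h
    exact ⟨fun a b => by rw [h a, h b]⟩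

lemma extZero_of_iso (A : ModuleCat.{u} R) {B B' : ModuleCat.{u} R} (e : B ≅ B') (n : ℕ)
    (h : extZero R A B n) : extZero R A B' n := by
  rw [extZero_iff_all] at h ⊢
  intro x
  have hx : x = (x.comp (Ext.mk₀ e.inv) (add_zero n)).comp (Ext.mk₀ e.hom) (add_zero n) := by
    rw [Ext.comp_assoc_of_third_deg_zero, Ext.mk₀_comp_mk₀, e.inv_hom_id, Ext.comp_mk₀_id]
  rw [hx, h (x.comp (Ext.mk₀ e.inv) (add_zero n)), Ext.zero_comp]

lemma les_sub₁ {F : ModuleCat.{u} R} {S : ShortComplex (ModuleCat.{u} R)} (hS : S.ShortExact)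
    {n₀ n₁ : ℕ} (h : n₀ + 1 = n₁)
    (h₃ : extZero R F S.X₃ n₀) (h₂ : extZero R F S.X₂ n₁) : extZero R F S.X₁ n₁ := by
  rw [extZero_iff_all] at h₃ h₂ ⊢
  intro x
  obtain ⟨x₃, hx₃⟩ := Ext.covariant_sequence_exact₁ F hS x (h₂ _) h
  rw [← hx₃, h₃ x₃, Ext.zero_comp]

lemma les_sub₃ {F : ModuleCat.{u} R} {S : ShortComplex (ModuleCat.{u} R)} (hS : S.ShortExact)
    {n₀ n₁ : ℕ} (h : n₀ + 1 = n₁)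
    (h₂ : extZero R F S.X₂ n₀) (h₁ : extZero R F S.X₁ n₁) : extZero R F S.X₃ n₀ := by
  rw [extZero_iff_all] at h₂ h₁ ⊢
  intro x
  obtain ⟨x₂, hx₂⟩ := Ext.covariant_sequence_exact₃ F hS x h (h₁ _)
  rw [← hx₂, h₂ x₂, Ext.zero_comp]

/-- A chain map from a complex which is exact at `m` into the single complex with an
injective module in degree `m` is null-homotopic. -/
lemma null_homotopic_to_single (E : ModuleCat.{u} R) (hE : Injective E) (m : ℤ)
    (T : CochainComplex (ModuleCat.{u} R) ℤ) (hT : T.ExactAt m)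
    (f : T ⟶ (HomologicalComplex.single (ModuleCat.{u} R) (ComplexShape.up ℤ) m).obj E) :
    Nonempty (Homotopy f 0) := by
  haveI : Injective (((HomologicalComplex.single (ModuleCat.{u} R)
      (ComplexShape.up ℤ) m).obj E).X m) :=
    Injective.of_iso (HomologicalComplex.singleObjXSelf (ComplexShape.up ℤ) m E).symm hE
  have hDd : ∀ k l : ℤ, ((HomologicalComplex.single (ModuleCat.{u} R)
      (ComplexShape.up ℤ) m).obj E).d k l = 0 :=
    fun k l => HomologicalComplex.single_obj_d _ _ _ _ _
  let d₀ : (T.X m : Type u) →ₗ[R] T.X (m + 1) := (T.d m (m + 1)).hom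
  let g : (T.X m : Type u) →ₗ[R] ((HomologicalComplex.single (ModuleCat.{u} R)
      (ComplexShape.up ℤ) m).obj E).X m := (f.f m).hom
  have hker : LinearMap.ker d₀ ≤ LinearMap.ker g := by
    intro x hx
    have hex : (T.sc' (m - 1) m (m + 1)).Exact := by
      rw [← HomologicalComplex.exactAt_iff' T (m - 1) m (m + 1) (by simp) (by simp)]
      exact hT
    rw [ShortComplex.moduleCat_exact_iff] at hex
    obtain ⟨y, hy⟩ := hex x (LinearMap.mem_ker.1 hx)
    rw [LinearMap.mem_ker]
    show (f.f m).hom x = 0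
    have hy' : T.d (m - 1) m y = x := hy
    rw [← hy']
    have hc := congrArg (fun φ => φ.hom y) (f.comm (m - 1) m)
    have hz : (f.f (m - 1) ≫ ((HomologicalComplex.single (ModuleCat.{u} R)
        (ComplexShape.up ℤ) m).obj E).d (m - 1) m) y = 0 := by
      rw [hDd, Limits.comp_zero]
      rfl
    exact hc.symm.trans hz
  let ψ : ↥(LinearMap.range d₀) →ₗ[R] ((HomologicalComplex.single (ModuleCat.{u} R)
      (ComplexShape.up ℤ) m).obj E).X m :=
    ((LinearMap.ker d₀).liftQ g hker).comp d₀.quotKerEquivRange.symm.toLinearMap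
  have key : ∀ x : T.X m, ψ (d₀.rangeRestrict x) = g x := by
    intro x
    have h1 : d₀.quotKerEquivRange.symm (d₀.rangeRestrict x) = Submodule.Quotient.mk x := by
      rw [LinearEquiv.symm_apply_eq]
      exact Subtype.ext (by rw [LinearMap.quotKerEquivRange_apply_mk]; rfl)
    show ((LinearMap.ker d₀).liftQ g hker) (d₀.quotKerEquivRange.symm (d₀.rangeRestrict x)) = g x
    rw [h1, Submodule.liftQ_apply]
  let inc : ModuleCat.of R ↥(LinearMap.range d₀) ⟶ T.X (m + 1) := ModuleCat.ofHom (LinearMap.range d₀).subtype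
  haveI : Mono inc := (ModuleCat.mono_iff_injective inc).2 Subtype.val_injective
  let κ : T.X (m + 1) ⟶ ((HomologicalComplex.single (ModuleCat.{u} R)
      (ComplexShape.up ℤ) m).obj E).X m :=
    Injective.factorThru (ModuleCat.ofHom ψ : ModuleCat.of R ↥(LinearMap.range d₀) ⟶ _) inc
  have hκ : T.d m (m + 1) ≫ κ = f.f m := by
    apply ModuleCat.hom_ext
    apply LinearMap.ext
    intro x
    have h2 := congrArg (fun φ => φ.hom (d₀.rangeRestrict x))
      (Injective.comp_factorThru (ModuleCat.ofHom ψ : ModuleCat.of R ↥(LinearMap.range d₀) ⟶ _) inc)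
    show κ (T.d m (m + 1) x) = f.f m x
    have h3 : T.d m (m + 1) x = inc (d₀.rangeRestrict x) := rfl
    rw [h3]
    exact h2.trans (key x)
  let hfun : ∀ i j, T.X i ⟶ ((HomologicalComplex.single (ModuleCat.{u} R)
      (ComplexShape.up ℤ) m).obj E).X j := fun i j =>
    if h : i = m + 1 ∧ j = m then
      eqToHom (by rw [h.1]) ≫ κ ≫ eqToHom (by rw [h.2]) else 0
  refine ⟨{ hom := hfun, zero := ?_, comm := ?_ }⟩
  · intro i j hij
    show dite _ _ _ = _
    rw [dif_neg]
    rintro ⟨rfl, rfl⟩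
    exact hij (by simp)
  · intro i
    have hprev : prevD i hfun = 0 := by
      have h8 : prevD i hfun = hfun i ((ComplexShape.up ℤ).prev i) ≫
          ((HomologicalComplex.single (ModuleCat.{u} R)
          (ComplexShape.up ℤ) m).obj E).d ((ComplexShape.up ℤ).prev i) i := rfl
      rw [h8, hDd, comp_zero]
    by_cases hi : i = m
    · have hi' : m = i := hi.symm
      subst hi'
      rw [dNext_eq hfun (show (ComplexShape.up ℤ).Rel m (m + 1) by simp)]
      have h4 : hfun (m + 1) m = κ := by
        show dite _ _ _ = _
        rw [dif_pos ⟨rfl, rfl⟩]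
        simp
      rw [h4, hprev, hκ]
      simp
    · have h5 : f.f i = 0 :=
        (HomologicalComplex.isZero_single_obj_X (ComplexShape.up ℤ) m E i hi).eq_of_tgt _ _
      have h6 : dNext i hfun = 0 := by
        have h9 : dNext i hfun = T.d i ((ComplexShape.up ℤ).next i) ≫
            hfun ((ComplexShape.up ℤ).next i) i := rfl
        rw [h9]
        have h7 : hfun ((ComplexShape.up ℤ).next i) i = 0 := by
          show dite _ _ _ = _
          rw [dif_neg]
          rintro ⟨-, rfl⟩
          exact hi rfl
        rw [h7, comp_zero]
      rw [h5, h6, hprev]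
      simp

instance : (HomotopyCategory.quasiIso (ModuleCat.{u} R)
    (ComplexShape.up ℤ)).HasRightCalculusOfFractions := by
  rw [HomotopyCategory.quasiIso_eq_subcategoryAcyclic_W]
  infer_instance

/-- Any morphism in the derived category from a module in degree `0` to an injective module
placed in degree `m ≠ 0` vanishes. -/
lemma hom_single_single_zero (X E : ModuleCat.{u} R) (hE : Injective E) (m : ℤ) (hm : m ≠ 0)
    (u : (DerivedCategory.singleFunctor (ModuleCat.{u} R) 0).obj X ⟶
      (DerivedCategory.singleFunctor (ModuleCat.{u} R) m).obj E) : u = 0 := by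
  let W := HomotopyCategory.quasiIso (ModuleCat.{u} R) (ComplexShape.up ℤ)
  let u' : DerivedCategory.Qh.obj ((HomotopyCategory.singleFunctor (ModuleCat.{u} R) 0).obj X) ⟶
      DerivedCategory.Qh.obj ((HomotopyCategory.singleFunctor (ModuleCat.{u} R) m).obj E) := u
  obtain ⟨φ, hφ⟩ := Localization.exists_rightFraction DerivedCategory.Qh W u'
  obtain ⟨T, s, hs, g, rfl⟩ := φ.cases
  have hmap := MorphismProperty.RightFraction.map_s_comp_map
    (MorphismProperty.RightFraction.mk s hs g) DerivedCategory.Qh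
    (Localization.inverts DerivedCategory.Qh W)
  have hsW := hs
  obtain ⟨Tc⟩ := T
  obtain ⟨g', hg'⟩ := (HomotopyCategory.quotient (ModuleCat.{u} R)
    (ComplexShape.up ℤ)).map_surjective g
  obtain ⟨s', hs'⟩ := (HomotopyCategory.quotient (ModuleCat.{u} R)
    (ComplexShape.up ℤ)).map_surjective s
  have hs2 : HomologicalComplex.quasiIso (ModuleCat.{u} R) (ComplexShape.up ℤ) s' := by
    rw [← HomotopyCategory.quotient_map_mem_quasiIso_iff]
    show W _
    rw [hs']
    exact hs
  rw [HomologicalComplex.mem_quasiIso_iff] at hs2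
  have hT : Tc.ExactAt m := by
    have hsingle : ((HomologicalComplex.single (ModuleCat.{u} R) (ComplexShape.up ℤ) 0).obj
        X).ExactAt m := HomologicalComplex.exactAt_single_obj _ _ _ _ hm
    exact (quasiIsoAt_iff_exactAt' s' m hsingle).1 (hs2.quasiIsoAt m)
  obtain ⟨H⟩ := null_homotopic_to_single E hE m Tc hT g'
  haveI : IsIso (DerivedCategory.Qh.map s) := Localization.inverts DerivedCategory.Qh W s hsW
  have h2 : DerivedCategory.Qh.map s ≫ u' = 0 := by
    rw [hφ, hmap, ← hg', HomotopyCategory.eq_of_homotopy g' 0 H, Functor.map_zero]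
    exact Functor.map_zero _ _ _
  have hu' : u' = 0 := by
    rw [← IsIso.inv_hom_id_assoc (DerivedCategory.Qh.map s) u', h2, comp_zero]
  exact hu'

lemma extZero_of_injective (F E : ModuleCat.{u} R) (hE : Injective E) (k : ℕ) (hk : 1 ≤ k) :
    extZero R F E k := by
  rw [extZero_iff_all]
  intro x
  apply Abelian.Ext.ext
  rw [Abelian.Ext.zero_hom]
  let e := (DerivedCategory.singleFunctors (ModuleCat.{u} R)).shiftIso (k : ℤ) (-(k : ℤ)) 0
    (by omega)
  have h0 : x.hom ≫ (e.app E).hom = 0 :=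
    hom_single_single_zero F E hE (-(k : ℤ)) (by omega) (x.hom ≫ (e.app E).hom)
  have hx : x.hom = (x.hom ≫ (e.app E).hom) ≫ (e.app E).inv := by simp
  rw [hx, h0, Limits.zero_comp]

lemma cores_vanish {M : ModuleCat.{u} R} {k : ℕ}
    (h : Cores R (StronglyFPInjective R) M k) :
    ∀ F, FinPres R F → ∀ i, 1 ≤ i → extZero R F M (i + k) := by
  induction h with
  | base e hE =>
      intro F hF i hi
      exact extZero_of_iso F e.symm _ (hE F hF i hi)
  | step S hS hX h ih =>
      intro F hF i hi
      exact les_sub₁ hS rfl (ih F hF i hi) (hX F hF _ (by omega))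

lemma vanish_cores : ∀ (m : ℕ) (M : ModuleCat.{u} R),
    (∀ F, FinPres R F → ∀ i, 1 ≤ i → extZero R F M (i + m)) →
    Cores R (StronglyFPInjective R) M m := by
  intro m
  induction m with
  | zero =>
      intro M h
      exact Cores.base (Iso.refl M) (fun F hF k hk => h F hF k hk)
  | succ m ih =>
      intro M h
      let f := Injective.ι M
      let S : ShortComplex (ModuleCat.{u} R) :=
        ShortComplex.mk f (cokernel.π f) (cokernel.condition f)
      have hS : S.ShortExact := ShortComplex.ShortExact.mk'
        (ShortComplex.exact_of_g_is_cokernel _ (cokernelIsCokernel f))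
        (inferInstance : Mono f) (inferInstance : Epi (cokernel.π f))
      have hinj : Injective S.X₂ := Injective.injective_under M
      have hX₂ : StronglyFPInjective R S.X₂ :=
        fun F hF k hk => extZero_of_injective F _ hinj k hk
      have hcok : ∀ F, FinPres R F → ∀ i, 1 ≤ i → extZero R F S.X₃ (i + m) := by
        intro F hF i hi
        exact les_sub₃ hS rfl (hX₂ F hF (i + m) (by omega)) (h F hF i hi)
      exact Cores.step S hS hX₂ (ih S.X₃ hcok)

end Auxiliary

/-- `M` has strongly FP-injective coresolution dimension at most `m` iff
`Ext^{i+m}(F, M) = 0` for every finitely presented `F` and every `i ≥ 1`. -/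
theorem stmt_0 (M : ModuleCat.{u} R) (m : ℕ) :
    SFIdimLE R M m ↔
      ∀ F : ModuleCat.{u} R, FinPres R F → ∀ i : ℕ, 1 ≤ i → extZero R F M (i + m) := by
  constructor
  · rintro ⟨k, hk, hc⟩ F hF i hi
    have h1 := cores_vanish hc F hF (i + (m - k)) (by omega)
    have e : i + (m - k) + k = i + m := by omega
    exact e ▸ h1
  · intro h
    exact ⟨m, le_refl m, vanish_cores m M h⟩
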